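/- Let X be a metrizable topological space and E an equivalence relation on X. Then exactly one of the following holds: (a) every equivalence class of E is open; (b) there is an injective continuous map f : 𝕂 → X such that either (i) f(x) E f(y) ⇔ x = y for all x, y ∈ 𝕂, or (ii) f(x) E f(y) ⇔ (x = y = 0 or (x ≠ 0 and y ≠ 0)) for all x, y ∈ 𝕂. -/

import Mathlib

/-- The compact countable space 𝕂 = {0} ∪ {2^{-k} | k ∈ ℕ} ⊆ ℝ. -/
def Kspace : Set ℝ := insert 0 {x : ℝ | ∃ k : ℕ, x = (1 / 2 : ℝ) ^ k}

lemma half_strictAnti : StrictAnti (fun k : ℕ => (1 / 2 : ℝ) ^ k) :=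
  pow_right_strictAnti₀ (by norm_num) (by norm_num)

lemma half_mem (k : ℕ) : ((1 / 2 : ℝ) ^ k) ∈ Kspace := Or.inr ⟨k, rfl⟩

lemma zero_mem : (0 : ℝ) ∈ Kspace := Or.inl rfl

lemma Khalf_pos (k : ℕ) : (0 : ℝ) < (1 / 2 : ℝ) ^ k := by positivity

/-- Isolation of nonzero points of Kspace. -/
lemma K_isolated (k : ℕ) (y : ℝ) (hy : y ∈ Kspace)
    (h : |y - (1 / 2 : ℝ) ^ k| < (1 / 2 : ℝ) ^ (k + 1)) : y = (1 / 2 : ℝ) ^ k := by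
  rcases hy with rfl | ⟨j, rfl⟩
  · exfalso
    rw [abs_sub_lt_iff] at h
    have h2 : (1 / 2 : ℝ) ^ (k + 1) < (1 / 2 : ℝ) ^ k := half_strictAnti (Nat.lt_succ_self k)
    nlinarith [Khalf_pos k, h.2]
  · rcases lt_trichotomy j k with hj | rfl | hj
    · exfalso
      have h1 : (1 / 2 : ℝ) ^ (k - 1) ≤ (1 / 2 : ℝ) ^ j :=
        half_strictAnti.antitone (by omega)
      have h2 : (1 / 2 : ℝ) ^ k = (1 / 2 : ℝ) ^ (k - 1) * (1 / 2) := by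
        rw [← pow_succ]; congr 1; omega
      have h3 : (1 / 2 : ℝ) ^ (k + 1) = (1 / 2 : ℝ) ^ k * (1 / 2) := by rw [pow_succ]
      rw [abs_sub_lt_iff] at h
      nlinarith [Khalf_pos (k - 1), h.2]
    · rfl
    · exfalso
      have h1 : (1 / 2 : ℝ) ^ j ≤ (1 / 2 : ℝ) ^ (k + 1) :=
        half_strictAnti.antitone (by omega)
      have h3 : (1 / 2 : ℝ) ^ (k + 1) = (1 / 2 : ℝ) ^ k * (1 / 2) := by rw [pow_succ]
      rw [abs_sub_lt_iff] at h
      nlinarith [Khalf_pos j, h.1]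

theorem open_classes_dichotomy {X : Type*} [TopologicalSpace X]
    [TopologicalSpace.MetrizableSpace X] (E : X → X → Prop) (hE : Equivalence E) :
    Xor' (∀ x : X, IsOpen {y : X | E x y})
      (∃ f : Kspace → X, Function.Injective f ∧ Continuous f ∧
        ((∀ x y : Kspace, E (f x) (f y) ↔ x = y) ∨
         (∀ x y : Kspace, E (f x) (f y) ↔
            (((x : ℝ) = 0 ∧ (y : ℝ) = 0) ∨ ((x : ℝ) ≠ 0 ∧ (y : ℝ) ≠ 0))))) := by
  classical
  letI : MetricSpace X := TopologicalSpace.metrizableSpaceMetric X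
  -- nonzero elements of Kspace have the form (1/2)^k
  have hne : ∀ x : Kspace, (x : ℝ) ≠ 0 → ∃ k : ℕ, (x : ℝ) = (1 / 2 : ℝ) ^ k := by
    rintro ⟨x, hx | hx⟩ h
    · exact absurd hx h
    · exact hx
  -- exclusivity: (a) and (b) cannot both hold
  have hexcl : (∀ x : X, IsOpen {y : X | E x y}) →
      ¬(∃ f : Kspace → X, Function.Injective f ∧ Continuous f ∧
        ((∀ x y : Kspace, E (f x) (f y) ↔ x = y) ∨
         (∀ x y : Kspace, E (f x) (f y) ↔
            (((x : ℝ) = 0 ∧ (y : ℝ) = 0) ∨ ((x : ℝ) ≠ 0 ∧ (y : ℝ) ≠ 0))))) := by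
    rintro hopen ⟨f, hfi, hfc, hiff⟩
    set x0 : Kspace := ⟨0, zero_mem⟩ with hx0
    have hpre : IsOpen (f ⁻¹' {y | E (f x0) y}) := (hopen (f x0)).preimage hfc
    have hx0mem : x0 ∈ f ⁻¹' {y | E (f x0) y} := hE.refl _
    rw [Metric.isOpen_iff] at hpre
    obtain ⟨ε, hε, hball⟩ := hpre x0 hx0mem
    obtain ⟨k, hk⟩ := exists_pow_lt_of_lt_one hε (by norm_num : (1 / 2 : ℝ) < 1)
    set p : Kspace := ⟨(1 / 2 : ℝ) ^ k, half_mem k⟩ with hp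
    have hd : dist p x0 = (1 / 2 : ℝ) ^ k := by
      rw [Subtype.dist_eq, Real.dist_eq]
      show |(1 / 2 : ℝ) ^ k - 0| = _
      rw [sub_zero, abs_of_pos (Khalf_pos k)]
    have hpball : p ∈ Metric.ball x0 ε := by rw [Metric.mem_ball, hd]; exact hk
    have hEp : E (f x0) (f p) := hball hpball
    rcases hiff with hiff | hiff
    · have := (hiff x0 p).mp hEp
      have : (0 : ℝ) = (1 / 2 : ℝ) ^ k := congrArg Subtype.val this
      exact absurd this.symm (ne_of_gt (Khalf_pos k))
    · rcases (hiff x0 p).mp hEp with ⟨_, h2⟩ | ⟨h1, _⟩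
      · exact absurd h2 (ne_of_gt (Khalf_pos k))
      · exact h1 rfl
  by_cases hopen : ∀ x : X, IsOpen {y : X | E x y}
  · exact Or.inl ⟨hopen, hexcl hopen⟩
  right
  refine ⟨?_, hopen⟩
  push_neg at hopen
  obtain ⟨x₀, hx₀⟩ := hopen
  rw [Metric.isOpen_iff] at hx₀
  push_neg at hx₀
  obtain ⟨z, hzS, hz⟩ := hx₀
  -- a sequence u n → z with ¬ E x₀ (u n)
  have hu : ∀ n : ℕ, ∃ w : X, dist w z < 1 / (n + 1 : ℝ) ∧ ¬E x₀ w := by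
    intro n
    obtain ⟨w, hw1, hw2⟩ := Set.not_subset.mp (hz (1 / (n + 1 : ℝ)) (by positivity))
    exact ⟨w, Metric.mem_ball.mp hw1, hw2⟩
  choose u hud hunS using hu
  have huz : ∀ n, u n ≠ z := fun n h => hunS n (h ▸ hzS)
  have hdpos : ∀ n, 0 < dist (u n) z := fun n => dist_pos.mpr (huz n)
  have hEzu : ∀ n, ¬E z (u n) := fun n h => hunS n (hE.trans hzS h)
  -- extract a subsequence, either all-equivalent or pairwise inequivalent
  have key : ∃ φ : ℕ → ℕ, StrictMono φ ∧ Function.Injective (fun n => u (φ n)) ∧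
      ((∀ j k, E (u (φ j)) (u (φ k))) ∨
       (∀ j k, j ≠ k → ¬E (u (φ j)) (u (φ k)))) := by
    by_cases hA : ∃ m : ℕ, {n : ℕ | E (u m) (u n)}.Infinite
    · obtain ⟨m, hm⟩ := hA
      set T := {n : ℕ | E (u m) (u n)} with hT
      have step : ∀ p : ℕ, p ∈ T → ∃ q, q ∈ T ∧ p < q ∧ dist (u q) z < dist (u p) z := by
        intro p hp
        obtain ⟨N, hN⟩ := exists_nat_one_div_lt (hdpos p)
        obtain ⟨q, hqT, hq⟩ := hm.exists_gt (max p N)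
        refine ⟨q, hqT, lt_of_le_of_lt (le_max_left _ _) hq, ?_⟩
        calc dist (u q) z < 1 / (q + 1 : ℝ) := hud q
          _ ≤ 1 / (N + 1 + 1 : ℝ) := by
              apply one_div_le_one_div_of_le (by positivity)
              have hNq : N + 1 ≤ q := lt_of_le_of_lt (le_max_right _ _) hq
              have : (N : ℝ) + 1 ≤ q := by exact_mod_cast hNq
              linarith
          _ < dist (u p) z := lt_of_le_of_lt (by
              apply one_div_le_one_div_of_le (by positivity); linarith) hN
      obtain ⟨c0, hc0⟩ := hm.nonempty
      let F : {p // p ∈ T} → {p // p ∈ T} := fun p => ⟨(step p.1 p.2).choose, (step p.1 p.2).choose_spec.1⟩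
      have hF1 : ∀ p : {p // p ∈ T}, p.1 < (F p).1 := fun p => (step p.1 p.2).choose_spec.2.1
      have hF2 : ∀ p : {p // p ∈ T}, dist (u (F p).1) z < dist (u p.1) z :=
        fun p => (step p.1 p.2).choose_spec.2.2
      set φ : ℕ → ℕ := fun n => (F^[n] ⟨c0, hc0⟩).1 with hφ
      have hsucc : ∀ n, F^[n + 1] ⟨c0, hc0⟩ = F (F^[n] ⟨c0, hc0⟩) := fun n =>
        Function.iterate_succ_apply' F n _
      have hmono : StrictMono φ := strictMono_nat_of_lt_succ fun n => by
        rw [hφ]; simp only [hsucc]; exact hF1 _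
      have hanti : StrictAnti (fun n => dist (u (φ n)) z) := strictAnti_nat_of_succ_lt fun n => by
        simp only [hφ, hsucc]; exact hF2 _
      have hinj : Function.Injective (fun n => u (φ n)) := by
        intro a b hab
        by_contra hne'
        rcases Ne.lt_or_gt hne' with h | h
        · exact absurd (congrArg (fun w => dist w z) hab) (ne_of_gt (hanti h))
        · exact absurd (congrArg (fun w => dist w z) hab) (ne_of_lt (hanti h))
      refine ⟨φ, hmono, hinj, Or.inl fun j k => ?_⟩
      have hj : φ j ∈ T := (F^[j] ⟨c0, hc0⟩).2
      have hk : φ k ∈ T := (F^[k] ⟨c0, hc0⟩).2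
      exact hE.trans (hE.symm hj) hk
    · push_neg at hA
      have hA : ∀ m : ℕ, {n : ℕ | E (u m) (u n)}.Finite := hA
      have step : ∀ p : ℕ, ∃ q, p < q ∧ ∀ r ≤ p, ¬E (u r) (u q) := by
        intro p
        have hfin : (Set.Iic p ∪ ⋃ r ∈ Set.Iic p, {n : ℕ | E (u r) (u n)}).Finite :=
          (Set.finite_Iic p).union ((Set.finite_Iic p).biUnion fun r _ => hA r)
        obtain ⟨q, hq⟩ := hfin.infinite_compl.nonempty
        simp only [Set.mem_compl_iff, Set.mem_union, Set.mem_Iic, Set.mem_iUnion,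
          Set.mem_setOf_eq, not_or, not_exists, not_le] at hq
        exact ⟨q, hq.1, fun r hr hEr => hq.2 r hr hEr⟩
      let F : ℕ → ℕ := fun p => (step p).choose
      have hF1 : ∀ p, p < F p := fun p => (step p).choose_spec.1
      have hF2 : ∀ p, ∀ r ≤ p, ¬E (u r) (u (F p)) := fun p => (step p).choose_spec.2
      set φ : ℕ → ℕ := fun n => F^[n] 0 with hφ
      have hsucc : ∀ n, φ (n + 1) = F (φ n) := fun n => Function.iterate_succ_apply' F n _
      have hmono : StrictMono φ := strictMono_nat_of_lt_succ fun n => by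
        rw [hsucc]; exact hF1 _
      have hpair : ∀ j k, j < k → ¬E (u (φ j)) (u (φ k)) := by
        intro j k hjk
        obtain ⟨k', rfl⟩ : ∃ k', k = k' + 1 := ⟨k - 1, by omega⟩
        rw [hsucc]
        exact hF2 (φ k') (φ j) (hmono.monotone (by omega))
      have hpair' : ∀ j k, j ≠ k → ¬E (u (φ j)) (u (φ k)) := by
        intro j k hjk
        rcases Ne.lt_or_gt hjk with h | h
        · exact hpair j k h
        · exact fun hEe => hpair k j h (hE.symm hEe)
      refine ⟨φ, hmono, fun a b hab => ?_, Or.inr hpair'⟩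
      by_contra hne'
      have hab' : u (φ a) = u (φ b) := hab
      exact hpair' a b hne' (hab' ▸ hE.refl _)
  obtain ⟨φ, hmono, hinj, hcase⟩ := key
  -- define f
  set f : Kspace → X := fun x =>
    if h : (x : ℝ) = 0 then z else u (φ (hne x h).choose) with hf
  have hf0 : ∀ (x : Kspace) (h : (x : ℝ) = 0), f x = z := by
    intro x h; rw [hf]; simp [h]
  have hfk : ∀ (x : Kspace) (h : (x : ℝ) ≠ 0), f x = u (φ (hne x h).choose) := by
    intro x h; rw [hf]; simp [h]
  have hfk' : ∀ (x : Kspace) (h : (x : ℝ) ≠ 0), (x : ℝ) = (1 / 2 : ℝ) ^ (hne x h).choose :=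
    fun x h => (hne x h).choose_spec
  -- f never sends nonzero points to z
  have hfnz : ∀ (x : Kspace) (h : (x : ℝ) ≠ 0), f x ≠ z := by
    intro x h; rw [hfk x h]; exact huz _
  -- injectivity
  have hfinj : Function.Injective f := by
    intro a b hab
    by_cases ha : (a : ℝ) = 0 <;> by_cases hb : (b : ℝ) = 0
    · exact Subtype.ext (ha.trans hb.symm)
    · exact absurd ((hf0 a ha ▸ hab).symm) (hfnz b hb)
    · exact absurd (hf0 b hb ▸ hab) (hfnz a ha)
    · rw [hfk a ha, hfk b hb] at hab
      have := hinj hab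
      apply Subtype.ext
      rw [hfk' a ha, hfk' b hb, this]
  -- continuity
  have hfcont : Continuous f := by
    rw [Metric.continuous_iff]
    rintro b ε hε
    by_cases hb : (b : ℝ) = 0
    · -- continuity at 0
      obtain ⟨N, hN⟩ := exists_nat_one_div_lt hε
      refine ⟨(1 / 2 : ℝ) ^ N, Khalf_pos N, fun a hab => ?_⟩
      by_cases ha : (a : ℝ) = 0
      · rw [hf0 a ha, hf0 b hb]; simpa using hε
      · rw [hf0 b hb, hfk a ha]
        set k := (hne a ha).choose with hk
        have hak : (a : ℝ) = (1 / 2 : ℝ) ^ k := hfk' a ha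
        rw [Subtype.dist_eq, Real.dist_eq, hak, hb, sub_zero,
          abs_of_pos (Khalf_pos k)] at hab
        have hkN : N < k := by
          by_contra hcon
          exact absurd hab (not_lt.mpr (half_strictAnti.antitone (not_lt.mp hcon)))
        calc dist (u (φ k)) z < 1 / (φ k + 1 : ℝ) := hud _
          _ ≤ 1 / (k + 1 : ℝ) := by
              apply one_div_le_one_div_of_le (by positivity)
              have h1 : k ≤ φ k := hmono.le_apply
              have : (k : ℝ) ≤ φ k := by exact_mod_cast h1
              linarith
          _ ≤ 1 / (N + 1 + 1 : ℝ) := by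
              apply one_div_le_one_div_of_le (by positivity)
              have hkN' : N + 1 ≤ k := hkN
              have : (N : ℝ) + 1 ≤ k := by exact_mod_cast hkN'
              linarith
          _ < ε := lt_of_le_of_lt (by
              apply one_div_le_one_div_of_le (by positivity); linarith) hN
    · -- b is isolated
      set k := (hne b hb).choose with hk
      have hbk : (b : ℝ) = (1 / 2 : ℝ) ^ k := hfk' b hb
      refine ⟨(1 / 2 : ℝ) ^ (k + 1), Khalf_pos (k + 1), fun a hab => ?_⟩
      rw [Subtype.dist_eq, Real.dist_eq, hbk] at hab
      have : (a : ℝ) = (1 / 2 : ℝ) ^ k := K_isolated k a a.2 hab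
      have hab' : a = b := Subtype.ext (by rw [this, hbk])
      rw [hab']; simpa using hε
  refine ⟨f, hfinj, hfcont, ?_⟩
  -- the equivalence characterization
  have hEzu' : ∀ (x : Kspace) (h : (x : ℝ) ≠ 0), ¬E z (f x) := by
    intro x h; rw [hfk x h]; exact hEzu _
  rcases hcase with hall | hpair
  · -- case (ii): all nonzero values equivalent
    right
    intro x y
    constructor
    · intro hxy
      by_cases hx : (x : ℝ) = 0 <;> by_cases hy : (y : ℝ) = 0
      · exact Or.inl ⟨hx, hy⟩
      · exact absurd (hf0 x hx ▸ hxy) (hEzu' y hy)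
      · exact absurd (hf0 y hy ▸ hE.symm hxy) (hEzu' x hx)
      · exact Or.inr ⟨hx, hy⟩
    · rintro (⟨hx, hy⟩ | ⟨hx, hy⟩)
      · rw [hf0 x hx, hf0 y hy]; exact hE.refl z
      · rw [hfk x hx, hfk y hy]; exact hall _ _
  · -- case (i): pairwise inequivalent
    left
    intro x y
    constructor
    · intro hxy
      by_cases hx : (x : ℝ) = 0 <;> by_cases hy : (y : ℝ) = 0
      · exact Subtype.ext (hx.trans hy.symm)
      · exact absurd (hf0 x hx ▸ hxy) (hEzu' y hy)
      · exact absurd (hf0 y hy ▸ hE.symm hxy) (hEzu' x hx)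
      · rw [hfk x hx, hfk y hy] at hxy
        have : (hne x hx).choose = (hne y hy).choose := by
          by_contra hcon
          exact hpair _ _ hcon hxy
        exact Subtype.ext (by rw [hfk' x hx, hfk' y hy, this])
    · rintro rfl; exact hE.refl _
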